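/- Let R be a discrete valuation ring with fraction field F, set A = F × F with the swap involution σ(a,b) = (b,a), Λ = R × R, and e = (1,0) ∈ A. Let V be a finitely generated free A-module equipped with a nondegenerate σ-hermitian form Φ : V × V → A (additive in both arguments, Φ(αx, y) = αΦ(x,y), Φ(x, αy) = Φ(x,y)σ(α), Φ(y,x) = σ(Φ(x,y)) for α ∈ A). Then for every Λ-lattice M in V there is exactly one Λ-lattice Y in V satisfying eY = eM and Y = Y^#; it is given by Y = eM ⊕ {x ∈ (1−e)V : Φ(eM, x) ⊆ Λ}. -/

import Mathlib

def pairSubring (R F : Type*) [CommRing R] [Field F] [Algebra R F] : Subring (F × F) :=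
  ((algebraMap R F).prodMap (algebraMap R F)).range

def eImage (F : Type*) {V : Type*} [Field F] [AddCommGroup V] [Module (F × F) V]
    (S : Set V) : Set V :=
  (fun w => (((1 : F), (0 : F)) : F × F) • w) '' S

namespace Stmt14

variable {R F : Type*} [CommRing R] [Field F] [Algebra R F]
  {V : Type*} [AddCommGroup V] [Module (F × F) V]

lemma mem_pairSubring {p : F × F} :
    p ∈ pairSubring R F ↔ (∃ r : R, algebraMap R F r = p.1) ∧ (∃ s : R, algebraMap R F s = p.2) := by
  constructor
  · rintro ⟨⟨r, s⟩, rfl⟩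
    exact ⟨⟨r, rfl⟩, ⟨s, rfl⟩⟩
  · rintro ⟨⟨r, hr⟩, ⟨s, hs⟩⟩
    exact ⟨(r, s), by simp [RingHom.prodMap, hr, hs]⟩

lemma pair_mem_pairSubring {a b : F} (ha : ∃ r : R, algebraMap R F r = a)
    (hb : ∃ s : R, algebraMap R F s = b) : (a, b) ∈ pairSubring R F :=
  mem_pairSubring.2 ⟨ha, hb⟩

lemma diag_mem_pairSubring (r : R) :
    ((algebraMap R F r, algebraMap R F r) : F × F) ∈ pairSubring R F :=
  pair_mem_pairSubring ⟨r, rfl⟩ ⟨r, rfl⟩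

lemma e_mem_pairSubring : (((1:F), (0:F)) : F × F) ∈ pairSubring R F :=
  pair_mem_pairSubring ⟨1, map_one _⟩ ⟨0, map_zero _⟩

lemma swap_mem_pairSubring {p : F × F} (h : p ∈ pairSubring R F) :
    ((p.2, p.1) : F × F) ∈ pairSubring R F := by
  rw [mem_pairSubring] at h ⊢; exact ⟨h.2, h.1⟩

lemma subring_smul_def (a : pairSubring R F) (v : V) : a • v = (a : F × F) • v := rfl

lemma esmul_fsmul (v : V) : (((1:F),(0:F)) : F × F) • (((0:F),(1:F)) : F × F) • v = 0 := by
  rw [smul_smul]; norm_num [Prod.mk_mul_mk, Prod.mk_eq_zero]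
  exact zero_smul (F × F) v

lemma fsmul_esmul (v : V) : (((0:F),(1:F)) : F × F) • (((1:F),(0:F)) : F × F) • v = 0 := by
  rw [smul_smul]; norm_num [Prod.mk_mul_mk, Prod.mk_eq_zero]
  exact zero_smul (F × F) v

lemma esmul_esmul (v : V) : (((1:F),(0:F)) : F × F) • (((1:F),(0:F)) : F × F) • v
    = (((1:F),(0:F)) : F × F) • v := by
  rw [smul_smul]; norm_num [Prod.mk_mul_mk]

lemma fsmul_fsmul (v : V) : (((0:F),(1:F)) : F × F) • (((0:F),(1:F)) : F × F) • v
    = (((0:F),(1:F)) : F × F) • v := by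
  rw [smul_smul]; norm_num [Prod.mk_mul_mk]

lemma esmul_add_fsmul (v : V) :
    (((1:F),(0:F)) : F × F) • v + (((0:F),(1:F)) : F × F) • v = v := by
  rw [← add_smul]
  norm_num [Prod.mk_add_mk]
  exact one_smul (F × F) v

lemma smul_fst {a b b' : F} {w : V} (hw : (((1:F),(0:F)) : F × F) • w = w) :
    ((a, b) : F × F) • w = ((a, b') : F × F) • w := by
  conv_lhs => rw [← hw, smul_smul]
  conv_rhs => rw [← hw, smul_smul]
  norm_num [Prod.mk_mul_mk]

lemma smul_snd {a a' b : F} {w : V} (hw : (((0:F),(1:F)) : F × F) • w = w) :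
    ((a, b) : F × F) • w = ((a', b) : F × F) • w := by
  conv_lhs => rw [← hw, smul_smul]
  conv_rhs => rw [← hw, smul_smul]
  norm_num [Prod.mk_mul_mk]


section Phi
variable {Φ : V → V → F × F}

lemma phi_zero₁ (hsmul₁ : ∀ (a : F × F) (x y : V), Φ (a • x) y = a * Φ x y) (y : V) :
    Φ 0 y = 0 := by
  have := hsmul₁ 0 0 y; rwa [zero_smul, zero_mul] at this

lemma phi_zero₂ (hsmul₂ : ∀ (a : F × F) (x y : V), Φ x (a • y) = Φ x y * (a.2, a.1)) (x : V) :
    Φ x 0 = 0 := by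
  have := hsmul₂ 0 x 0
  rw [zero_smul] at this
  rw [this]
  obtain ⟨z1, z2⟩ := Φ x 0
  norm_num [Prod.mk_mul_mk, Prod.mk_eq_zero]

lemma phi_neg₂ (hsmul₂ : ∀ (a : F × F) (x y : V), Φ x (a • y) = Φ x y * (a.2, a.1)) (x y : V) :
    Φ x (-y) = - Φ x y := by
  have := hsmul₂ (-1) x y
  rw [neg_smul, one_smul] at this
  rw [this]
  have h2 : ((((-1 : F × F).2), ((-1 : F × F).1)) : F × F) = -1 := rfl
  rw [h2, mul_neg, mul_one]

lemma phi_sub₂ (hadd₂ : ∀ x y y' : V, Φ x (y + y') = Φ x y + Φ x y')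
    (hsmul₂ : ∀ (a : F × F) (x y : V), Φ x (a • y) = Φ x y * (a.2, a.1)) (x y y' : V) :
    Φ x (y - y') = Φ x y - Φ x y' := by
  rw [sub_eq_add_neg, hadd₂, phi_neg₂ hsmul₂, sub_eq_add_neg]

lemma phi_neg₁ (hsmul₁ : ∀ (a : F × F) (x y : V), Φ (a • x) y = a * Φ x y) (x y : V) :
    Φ (-x) y = - Φ x y := by
  have := hsmul₁ (-1) x y
  rwa [neg_smul, one_smul, neg_one_mul] at this

lemma phi_sub₁ (hadd₁ : ∀ x x' y : V, Φ (x + x') y = Φ x y + Φ x' y)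
    (hsmul₁ : ∀ (a : F × F) (x y : V), Φ (a • x) y = a * Φ x y) (x x' y : V) :
    Φ (x - x') y = Φ x y - Φ x' y := by
  rw [sub_eq_add_neg, hadd₁, phi_neg₁ hsmul₁, sub_eq_add_neg]

lemma phi_sum₁ (hadd₁ : ∀ x x' y : V, Φ (x + x') y = Φ x y + Φ x' y)
    (hsmul₁ : ∀ (a : F × F) (x y : V), Φ (a • x) y = a * Φ x y)
    {ι : Type*} (s : Finset ι) (w : ι → V) (y : V) :
    Φ (∑ i ∈ s, w i) y = ∑ i ∈ s, Φ (w i) y := by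
  classical
  induction s using Finset.induction_on with
  | empty => simpa using phi_zero₁ hsmul₁ y
  | insert a s' h ih =>
                   rw [Finset.sum_insert h, Finset.sum_insert h, hadd₁, ih]

lemma phi_sum₂ (hadd₂ : ∀ x y y' : V, Φ x (y + y') = Φ x y + Φ x y')
    (hsmul₂ : ∀ (a : F × F) (x y : V), Φ x (a • y) = Φ x y * (a.2, a.1))
    {ι : Type*} (s : Finset ι) (x : V) (w : ι → V) :
    Φ x (∑ i ∈ s, w i) = ∑ i ∈ s, Φ x (w i) := by
  classical
  induction s using Finset.induction_on with
  | empty => simpa using phi_zero₂ hsmul₂ x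
  | insert a s' h ih =>
                   rw [Finset.sum_insert h, Finset.sum_insert h, hadd₂, ih]

lemma phi_ee (hsmul₁ : ∀ (a : F × F) (x y : V), Φ (a • x) y = a * Φ x y)
    (hsmul₂ : ∀ (a : F × F) (x y : V), Φ x (a • y) = Φ x y * (a.2, a.1)) (a b : V) :
    Φ ((((1:F),(0:F)) : F × F) • a) ((((1:F),(0:F)) : F × F) • b) = 0 := by
  rw [hsmul₁, hsmul₂]
  obtain ⟨z1, z2⟩ := Φ a b
  norm_num [Prod.mk_mul_mk, Prod.mk_eq_zero]

lemma phi_ff (hsmul₁ : ∀ (a : F × F) (x y : V), Φ (a • x) y = a * Φ x y)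
    (hsmul₂ : ∀ (a : F × F) (x y : V), Φ x (a • y) = Φ x y * (a.2, a.1)) (a b : V) :
    Φ ((((0:F),(1:F)) : F × F) • a) ((((0:F),(1:F)) : F × F) • b) = 0 := by
  rw [hsmul₁, hsmul₂]
  obtain ⟨z1, z2⟩ := Φ a b
  norm_num [Prod.mk_mul_mk, Prod.mk_eq_zero]

lemma phi_ef_snd (hsmul₁ : ∀ (a : F × F) (x y : V), Φ (a • x) y = a * Φ x y)
    (hsmul₂ : ∀ (a : F × F) (x y : V), Φ x (a • y) = Φ x y * (a.2, a.1)) (a b : V) :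
    (Φ ((((1:F),(0:F)) : F × F) • a) ((((0:F),(1:F)) : F × F) • b)).2 = 0 := by
  rw [hsmul₁, hsmul₂]
  obtain ⟨z1, z2⟩ := Φ a b
  norm_num [Prod.mk_mul_mk]

end Phi


def emulL (R F V : Type*) [CommRing R] [Field F] [Algebra R F] [AddCommGroup V]
    [Module (F × F) V] : V →ₗ[pairSubring R F] V where
  toFun v := (((1:F),(0:F)) : F × F) • v
  map_add' x y := smul_add _ x y
  map_smul' a v := by
    show (((1:F),(0:F)) : F × F) • ((a : F × F) • v) = (a : F × F) • ((((1:F),(0:F)) : F × F) • v)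
    rw [smul_smul, smul_smul, mul_comm]

lemma emulL_apply (v : V) :
    emulL R F V v = (((1:F),(0:F)) : F × F) • v := rfl

lemma mem_emul_image {M : Submodule (pairSubring R F) V} {m : V} (hm : m ∈ Submodule.map (emulL R F V) M) :
    (((1:F),(0:F)) : F × F) • m = m := by
  obtain ⟨w, _, rfl⟩ := hm
  exact esmul_esmul w

variable [IsDomain R] [IsDiscreteValuationRing R] [IsFractionRing R F]

/-- The diagonal ring hom `R →+* Λ`. -/
noncomputable def rho (R F : Type*) [CommRing R] [Field F] [Algebra R F] :
    R →+* pairSubring R F :=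
  (((algebraMap R F).prodMap (algebraMap R F)).rangeRestrict).comp
    ((RingHom.id R).prod (RingHom.id R))

lemma rho_coe (r : R) : ((rho R F r : pairSubring R F) : F × F)
    = ((algebraMap R F r, algebraMap R F r) : F × F) := rfl

set_option maxHeartbeats 1600000 in
set_option synthInstance.maxHeartbeats 400000 in
lemma exists_dual_system
    (Φ : V → V → F × F)
    (hadd₁ : ∀ x x' y : V, Φ (x + x') y = Φ x y + Φ x' y)
    (hadd₂ : ∀ x y y' : V, Φ x (y + y') = Φ x y + Φ x y')
    (hsmul₁ : ∀ (a : F × F) (x y : V), Φ (a • x) y = a * Φ x y)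
    (hsmul₂ : ∀ (a : F × F) (x y : V), Φ x (a • y) = Φ x y * (a.2, a.1))
    (hnd : ∀ x : V, (∀ y : V, Φ x y = 0) → x = 0)
    (M : Submodule (pairSubring R F) V)
    (hMfg : M.FG) (hMfull : Submodule.span (F × F) (M : Set V) = ⊤) :
    ∃ (n : ℕ) (u xx : Fin n → V),
      (∀ i, u i ∈ Submodule.map (emulL R F V) M) ∧
      (∀ j, ∃ v, xx j = (((0:F),(1:F)) : F × F) • v) ∧
      (∀ i j, Φ (u i) (xx j) = ((if i = j then (1:F) else 0), (0:F))) ∧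
      (∀ m ∈ Submodule.map (emulL R F V) M, ∃ r : Fin n → R,
        m = ∑ i, ((algebraMap R F (r i), algebraMap R F (r i)) : F × F) • u i) ∧
      (∀ v : V, ∃ c : Fin n → F,
        (((1:F),(0:F)) : F × F) • v = ∑ i, ((c i, c i) : F × F) • u i) := by
  classical
  set E : Submodule (pairSubring R F) V := Submodule.map (emulL R F V) M with hE
  have hEfg : E.FG := hMfg.map _
  obtain ⟨T, hT⟩ := hEfg
  have hTE : (T : Set V) ⊆ (E : Set V) := hT ▸ Submodule.subset_span
  -- R-module structure on E
  letI : Module R E := Module.compHom _ (rho R F)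
  have hcoe : ∀ (r : R) (y : E), ((r • y : E) : V)
      = ((algebraMap R F r, algebraMap R F r) : F × F) • (y : V) := fun r y => rfl
  -- finiteness over R
  haveI : Module.Finite R E := by
    rw [Module.finite_def]
    refine ⟨T.attach.image (fun t => (⟨t.1, hTE t.2⟩ : E)), eq_top_iff.2 ?_⟩
    rintro ⟨m, hm⟩ -
    have hm' : m ∈ Submodule.span (pairSubring R F) (T : Set V) := hT.symm ▸ hm
    refine Submodule.span_induction
      (p := fun v _ => ∀ hv : v ∈ E, (⟨v, hv⟩ : E) ∈
        Submodule.span R ((T.attach.image (fun t => (⟨t.1, hTE t.2⟩ : E)) : Finset E) : Set E))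
      ?_ ?_ ?_ ?_ hm' hm
    · intro v hv hvE
      apply Submodule.subset_span
      simp only [Finset.coe_image, Set.mem_image]
      exact ⟨⟨v, hv⟩, by simp, rfl⟩
    · intro hv
      have : (⟨0, hv⟩ : E) = 0 := rfl
      rw [this]; exact Submodule.zero_mem _
    · intro a b ha hb pa pb hv
      have haE : a ∈ E := hT ▸ ha
      have hbE : b ∈ E := hT ▸ hb
      have : (⟨a + b, hv⟩ : E) = ⟨a, haE⟩ + ⟨b, hbE⟩ := rfl
      rw [this]; exact Submodule.add_mem _ (pa haE) (pb hbE)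
    · intro a v hvmem pv hv
      have hvE : v ∈ E := hT ▸ hvmem
      obtain ⟨⟨r, s⟩, hrs⟩ := a.2
      have hav : a • v = ((algebraMap R F r, algebraMap R F r) : F × F) • v := by
        have h1 : (a : F × F) = ((algebraMap R F r, algebraMap R F s) : F × F) := by
          rw [← hrs]; rfl
        rw [subring_smul_def, h1]
        exact smul_fst (mem_emul_image hvE)
      have : (⟨a • v, hv⟩ : E) = r • (⟨v, hvE⟩ : E) := by
        apply Subtype.ext
        rw [hcoe]
        exact hav
      rw [this]
      exact Submodule.smul_mem _ _ (pv hvE)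
  -- torsion-free over R
  haveI : NoZeroSMulDivisors R E := by
    refine ⟨fun {r x} h => ?_⟩
    by_cases hr : r = 0
    · exact Or.inl hr
    · right
      have hco : ((r • x : E) : V) = 0 := by rw [h]; rfl
      rw [hcoe] at hco
      have hrF : algebraMap R F r ≠ 0 := by
        intro h0
        exact hr (IsFractionRing.injective R F (by rw [h0, map_zero]))
      have : (x : V) = 0 := by
        have := congrArg (fun w => (((algebraMap R F r)⁻¹, (algebraMap R F r)⁻¹) : F × F) • w) hco
        simpa [smul_smul, Prod.mk_mul_mk, inv_mul_cancel₀ hrF, Prod.mk_one_one] using this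
      exact Subtype.ext this
  haveI : Module.Free R E := Module.free_of_finite_type_torsion_free'
  -- choose a basis
  let b0 := Module.Free.chooseBasis R E
  obtain ⟨n, ⟨eqv⟩⟩ : ∃ n, Nonempty (Module.Free.ChooseBasisIndex R E ≃ Fin n) :=
    ⟨_, ⟨Fintype.equivFin _⟩⟩
  let b : Module.Basis (Fin n) R E := b0.reindex eqv
  let u : Fin n → V := fun i => (b i : V)
  have hu : ∀ i, u i = ((b i : E) : V) := fun _ => rfl
  have hu_mem : ∀ i, u i ∈ E := fun i => (b i).2
  have hu_idem : ∀ i, (((1:F),(0:F)) : F × F) • u i = u i := fun i => mem_emul_image (hu_mem i)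
  -- representation of elements of E
  have hErep : ∀ m ∈ E, ∃ r : Fin n → R,
      m = ∑ i, ((algebraMap R F (r i), algebraMap R F (r i)) : F × F) • u i := by
    intro m hm
    refine ⟨fun i => b.repr ⟨m, hm⟩ i, ?_⟩
    have h1 : (⟨m, hm⟩ : E) = ∑ i, b.repr ⟨m, hm⟩ i • b i := (b.sum_repr ⟨m, hm⟩).symm
    have h2 := congrArg (Subtype.val) h1
    rw [Submodule.coe_sum] at h2
    simpa [hcoe, hu] using h2
  -- R-linear independence in V
  have hFind : ∀ r : Fin n → R,
      ∑ i, ((algebraMap R F (r i), algebraMap R F (r i)) : F × F) • u i = 0 → ∀ i, r i = 0 := by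
    intro r hr
    have h1 : ((∑ i, r i • b i : E) : V) = 0 := by
      rw [Submodule.coe_sum]
      simpa [hcoe, hu] using hr
    have h2 : (∑ i, r i • b i : E) = 0 := Subtype.ext h1
    exact Fintype.linearIndependent_iff.mp b.linearIndependent r h2
  -- F-linear independence (diagonal coefficients)
  have hFindF : ∀ c : Fin n → F, ∑ i, ((c i, c i) : F × F) • u i = 0 → ∀ i, c i = 0 := by
    intro c hc
    obtain ⟨d, hd⟩ := IsLocalization.exist_integer_multiples (nonZeroDivisors R) Finset.univ c
    choose r hr using fun i => hd i (Finset.mem_univ i)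
    have hdF : algebraMap R F (d : R) ≠ 0 := by
      intro h0
      exact nonZeroDivisors.ne_zero d.2 (IsFractionRing.injective R F (by rw [h0, map_zero]))
    have hsum : ∑ i, ((algebraMap R F (r i), algebraMap R F (r i)) : F × F) • u i = 0 := by
      have : ∀ i, ((algebraMap R F (r i), algebraMap R F (r i)) : F × F) • u i
          = ((algebraMap R F (d : R), algebraMap R F (d : R)) : F × F) • (((c i, c i) : F × F) • u i) := by
        intro i
        rw [smul_smul, Prod.mk_mul_mk]
        have : algebraMap R F (r i) = algebraMap R F (d : R) * c i := by
          rw [hr i]; exact (Algebra.smul_def _ _)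
        rw [this]
      rw [Finset.sum_congr rfl (fun i _ => this i), ← Finset.smul_sum, hc, smul_zero]
    intro i
    have hri := hFind r hsum i
    have : algebraMap R F (d : R) * c i = 0 := by
      rw [← Algebra.smul_def, ← hr i, hri, map_zero]
    rcases mul_eq_zero.mp this with h | h
    · exact absurd h hdF
    · exact h
  -- e-part of V is spanned by u
  have hS1 : ∀ v : V, ∃ c : Fin n → F,
      (((1:F),(0:F)) : F × F) • v = ∑ i, ((c i, c i) : F × F) • u i := by
    have hEP : (E : Set V) ⊆ (Submodule.span (F × F) (Set.range u) : Set V) := by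
      intro m hm
      obtain ⟨r, hr⟩ := hErep m hm
      rw [hr]
      exact Submodule.sum_mem _ (fun i _ =>
        Submodule.smul_mem _ _ (Submodule.subset_span (Set.mem_range_self i)))
    intro v
    let emulA : V →ₗ[F × F] V :=
      { toFun := fun w => (((1:F),(0:F)) : F × F) • w
        map_add' := fun x y => smul_add _ x y
        map_smul' := fun a w => by
          show (((1:F),(0:F)) : F × F) • (a • w) = a • ((((1:F),(0:F)) : F × F) • w)
          rw [smul_smul, smul_smul, mul_comm] }
    have hQ : (⊤ : Submodule (F × F) V) ≤
        Submodule.comap emulA (Submodule.span (F × F) (Set.range u)) := by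
      rw [← hMfull]
      apply Submodule.span_le.2
      intro m hm
      have : (((1:F),(0:F)) : F × F) • m ∈ E := ⟨m, hm, rfl⟩
      exact hEP this
    have hv : (((1:F),(0:F)) : F × F) • v ∈ Submodule.span (F × F) (Set.range u) :=
      hQ Submodule.mem_top
    obtain ⟨a, ha⟩ := (Submodule.mem_span_range_iff_exists_fun (F × F)).mp hv
    refine ⟨fun i => (a i).1, ?_⟩
    rw [← ha]
    apply Finset.sum_congr rfl
    intro i _
    have : a i = (((a i).1, (a i).2) : F × F) := rfl
    rw [this]
    exact (smul_fst (hu_idem i)).symm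
  -- the dual family
  have hpfull : ∀ y : Fin n → F, ∃ v : V, (fun i => (Φ (u i) v).1) = y := by
    let p : Submodule F (Fin n → F) :=
      { carrier := {y | ∃ v : V, (fun i => (Φ (u i) v).1) = y}
        zero_mem' := ⟨0, by funext i; rw [phi_zero₂ hsmul₂]; rfl⟩
        add_mem' := by
          rintro y y' ⟨v, rfl⟩ ⟨v', rfl⟩
          exact ⟨v + v', by funext i; rw [hadd₂]; rfl⟩
        smul_mem' := by
          rintro c y ⟨v, rfl⟩
          refine ⟨((c, c) : F × F) • v, ?_⟩
          funext i
          rw [hsmul₂]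
          show (Φ (u i) v * ((c, c) : F × F)).1 = c * (Φ (u i) v).1
          rw [Prod.fst_mul]
          exact mul_comm _ _ }
    suffices h : ∀ y, y ∈ p by exact h
    by_contra hcon
    push_neg at hcon
    obtain ⟨y₀, hy₀⟩ := hcon
    obtain ⟨g, hg0, hgmap⟩ := Submodule.exists_dual_map_eq_bot_of_notMem hy₀ inferInstance
    have gvanish : ∀ y ∈ p, g y = 0 := by
      intro y hy
      have : g y ∈ Submodule.map g p := Submodule.mem_map_of_mem hy
      rw [hgmap] at this
      exact this
    set t : Fin n → F := fun i => g (fun j => if i = j then 1 else 0) with ht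
    have hgsum : ∀ y : Fin n → F, g y = ∑ i, y i * t i := by
      intro y
      conv_lhs => rw [pi_eq_sum_univ y]
      rw [map_sum]
      exact Finset.sum_congr rfl (fun i _ => by rw [map_smul]; rfl)
    have hw : (∑ i, ((t i, (0:F)) : F × F) • u i) = 0 := by
      apply hnd
      intro y
      rw [phi_sum₁ hadd₁ hsmul₁]
      have h1 : ∀ i, Φ (((t i, (0:F)) : F × F) • u i) y = ((t i, (0:F)) : F × F) * Φ (u i) y :=
        fun i => hsmul₁ _ _ _
      rw [Finset.sum_congr rfl (fun i _ => h1 i)]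
      have h2 : g (fun i => (Φ (u i) y).1) = 0 := gvanish _ ⟨y, rfl⟩
      rw [hgsum] at h2
      apply Prod.ext
      · rw [Prod.fst_sum]
        simpa [Prod.fst_mul, mul_comm] using h2
      · rw [Prod.snd_sum]
        simp [Prod.snd_mul]
    have ht0 : ∀ i, t i = 0 := by
      have : ∑ i, ((t i, t i) : F × F) • u i = 0 := by
        rw [← hw]
        exact Finset.sum_congr rfl (fun i _ => (smul_fst (hu_idem i)))
      exact hFindF t this
    apply hg0
    rw [hgsum]
    simp [ht0]
  choose vv hvv using fun j : Fin n => hpfull (fun i => if i = j then (1:F) else 0)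
  let xx : Fin n → V := fun j => (((0:F),(1:F)) : F × F) • vv j
  refine ⟨n, u, xx, hu_mem, fun j => ⟨vv j, rfl⟩, ?_, hErep, hS1⟩
  intro i j
  show Φ (u i) ((((0:F),(1:F)) : F × F) • vv j) = _
  rw [hsmul₂]
  show Φ (u i) (vv j) * (((1:F),(0:F)) : F × F) = _
  have h1 : (Φ (u i) (vv j)).1 = if i = j then (1:F) else 0 := congrFun (hvv j) i
  refine Prod.ext ?_ ?_
  · rw [Prod.fst_mul]; simpa using h1
  · rw [Prod.snd_mul]; simp

end Stmt14

open Pointwise Stmt14 in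
theorem unique_unimodular_lattice_with_given_e_part
    {R F : Type*} [CommRing R] [IsDomain R] [IsDiscreteValuationRing R]
    [Field F] [Algebra R F] [IsFractionRing R F]
    {V : Type*} [AddCommGroup V] [Module (F × F) V]
    [Module.Free (F × F) V] [Module.Finite (F × F) V]
    (Φ : V → V → F × F)
    (hadd₁ : ∀ x x' y : V, Φ (x + x') y = Φ x y + Φ x' y)
    (hadd₂ : ∀ x y y' : V, Φ x (y + y') = Φ x y + Φ x y')
    (hsmul₁ : ∀ (a : F × F) (x y : V), Φ (a • x) y = a * Φ x y)
    (hsmul₂ : ∀ (a : F × F) (x y : V), Φ x (a • y) = Φ x y * (a.2, a.1))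
    (hherm : ∀ x y : V, Φ y x = ((Φ x y).2, (Φ x y).1))
    (hnd : ∀ x : V, (∀ y : V, Φ x y = 0) → x = 0)
    (M : Submodule (pairSubring R F) V)
    (hMfg : M.FG) (hMfull : Submodule.span (F × F) (M : Set V) = ⊤) :
    (∃! Y : Submodule (pairSubring R F) V,
      (Y.FG ∧ Submodule.span (F × F) (Y : Set V) = ⊤) ∧
      eImage F (Y : Set V) = eImage F (M : Set V) ∧
      (Y : Set V) = {x : V | ∀ y ∈ Y, Φ x y ∈ pairSubring R F}) ∧
    (∀ Y : Submodule (pairSubring R F) V,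
      ((Y.FG ∧ Submodule.span (F × F) (Y : Set V) = ⊤) ∧
        eImage F (Y : Set V) = eImage F (M : Set V) ∧
        (Y : Set V) = {x : V | ∀ y ∈ Y, Φ x y ∈ pairSubring R F}) →
      (Y : Set V) = {z : V | ∃ u ∈ eImage F (M : Set V), ∃ x : V,
        (∃ v : V, x = (((0 : F), (1 : F)) : F × F) • v) ∧
        (∀ u' ∈ eImage F (M : Set V), Φ u' x ∈ pairSubring R F) ∧
        z = u + x}) := by
  classical
  obtain ⟨n, u, xx, hu_mem, hx_form, hphi, hErep, hS1⟩ :=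
    exists_dual_system Φ hadd₁ hadd₂ hsmul₁ hsmul₂ hnd M hMfg hMfull
  set E : Submodule (pairSubring R F) V := Submodule.map (emulL R F V) M with hEdef
  have hEset : eImage F (M : Set V) = (E : Set V) := by
    rw [hEdef, Submodule.map_coe]; rfl
  have hE_idem : ∀ m ∈ E, (((1:F),(0:F)) : F × F) • m = m := fun m hm => mem_emul_image hm
  have hEset₁ : ∀ {w : V}, w ∈ eImage F (M : Set V) → w ∈ E := by
    intro w h; rw [hEset] at h; exact h
  have hEset₂ : ∀ {w : V}, w ∈ E → w ∈ eImage F (M : Set V) := by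
    intro w h; rw [hEset]; exact h
  have hu_idem : ∀ i, (((1:F),(0:F)) : F × F) • u i = u i := fun i => mem_emul_image (hu_mem i)
  have hxx_idem : ∀ j, (((0:F),(1:F)) : F × F) • xx j = xx j := by
    intro j; obtain ⟨v, hv⟩ := hx_form j; rw [hv]; exact fsmul_fsmul v
  -- the complementary lattice N
  set N : Submodule (pairSubring R F) V :=
    { carrier := {z | (∃ v, z = (((0:F),(1:F)) : F × F) • v) ∧
        ∀ u' ∈ eImage F (M : Set V), Φ u' z ∈ pairSubring R F}
      zero_mem' := ⟨⟨0, (smul_zero _).symm⟩, fun u' _ => by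
        rw [phi_zero₂ hsmul₂]; exact Subring.zero_mem _⟩
      add_mem' := by
        rintro a b ⟨⟨va, hva⟩, ha⟩ ⟨⟨vb, hvb⟩, hb⟩
        exact ⟨⟨va + vb, by rw [hva, hvb, smul_add]⟩,
          fun u' hu' => by rw [hadd₂]; exact Subring.add_mem _ (ha u' hu') (hb u' hu')⟩
      smul_mem' := by
        rintro c z ⟨⟨v, hv⟩, hz⟩
        refine ⟨⟨(c : F × F) • v, ?_⟩, fun u' hu' => ?_⟩
        · rw [subring_smul_def, hv, smul_smul, smul_smul, mul_comm]
        · rw [subring_smul_def, hsmul₂]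
          exact Subring.mul_mem _ (hz u' hu') (swap_mem_pairSubring c.2) } with hNdef
  have hN_mem : ∀ z : V, z ∈ N ↔ ((∃ v, z = (((0:F),(1:F)) : F × F) • v) ∧
      ∀ u' ∈ eImage F (M : Set V), Φ u' z ∈ pairSubring R F) := fun z => Iff.rfl
  have hxxN : ∀ j, xx j ∈ N := by
    intro j
    refine (hN_mem _).2 ⟨hx_form j, fun u' hu' => ?_⟩
    rw [hEset] at hu'
    obtain ⟨r, hr⟩ := hErep u' hu'
    rw [hr, phi_sum₁ hadd₁ hsmul₁]
    apply Subring.sum_mem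
    intro i _
    rw [hsmul₁, hphi i j]
    refine Subring.mul_mem _ (diag_mem_pairSubring (r i)) ?_
    by_cases h : i = j
    · simp only [h, if_pos rfl]; exact e_mem_pairSubring
    · simp only [if_neg h]
      exact pair_mem_pairSubring ⟨0, map_zero _⟩ ⟨0, map_zero _⟩
  -- key representation of the f-part
  have key_repr : ∀ z : V, (((0:F),(1:F)) : F × F) • z
      = ∑ j, (((Φ (u j) ((((0:F),(1:F)) : F × F) • z)).1,
               (Φ (u j) ((((0:F),(1:F)) : F × F) • z)).1) : F × F) • xx j := by
    intro z
    set zz := (((0:F),(1:F)) : F × F) • z with hzz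
    set c : Fin n → F := fun j => (Φ (u j) zz).1 with hc
    set w : V := zz - ∑ j, ((c j, c j) : F × F) • xx j with hwdef
    have hw_f : (((0:F),(1:F)) : F × F) • w = w := by
      rw [hwdef, smul_sub, hzz, fsmul_fsmul, Finset.smul_sum]
      congr 1
      apply Finset.sum_congr rfl
      intro j _
      rw [smul_smul, mul_comm, ← smul_smul, hxx_idem j]
    have hphiuz : ∀ i, Φ (u i) zz = ((c i, (0:F)) : F × F) := by
      intro i
      refine Prod.ext rfl ?_
      show (Φ (u i) zz).2 = 0
      rw [hzz, ← hu_idem i]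
      exact phi_ef_snd hsmul₁ hsmul₂ _ _
    have hw_phi : ∀ i, Φ (u i) w = 0 := by
      intro i
      rw [hwdef, phi_sub₂ hadd₂ hsmul₂, phi_sum₂ hadd₂ hsmul₂]
      have h1 : ∀ j, Φ (u i) (((c j, c j) : F × F) • xx j)
          = ((if i = j then c j else 0, (0:F)) : F × F) := by
        intro j
        rw [hsmul₂, hphi i j]
        refine Prod.ext ?_ ?_
        · show (if i = j then (1:F) else 0) * c j = _
          by_cases h : i = j <;> simp [h]
        · show (0:F) * c j = 0
          exact zero_mul _
      rw [Finset.sum_congr rfl (fun j _ => h1 j), hphiuz i]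
      refine sub_eq_zero.2 (Prod.ext ?_ ?_)
      · rw [Prod.fst_sum]
        simp
      · rw [Prod.snd_sum]
        simp
    have hw0 : w = 0 := by
      apply hnd
      intro y
      rw [hherm y w]
      suffices h : Φ y w = 0 by rw [h]; rfl
      have hsplit := hadd₁ ((((1:F),(0:F)) : F × F) • y) ((((0:F),(1:F)) : F × F) • y) w
      rw [esmul_add_fsmul] at hsplit
      rw [hsplit]
      have h2 : Φ ((((0:F),(1:F)) : F × F) • y) w = 0 := by
        rw [← hw_f]
        exact phi_ff hsmul₁ hsmul₂ _ _
      have h3 : Φ ((((1:F),(0:F)) : F × F) • y) w = 0 := by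
        obtain ⟨cy, hcy⟩ := hS1 y
        rw [hcy, phi_sum₁ hadd₁ hsmul₁]
        apply Finset.sum_eq_zero
        intro i _
        rw [hsmul₁, hw_phi i, mul_zero]
      rw [h2, h3, add_zero]
    have := sub_eq_zero.1 (hwdef ▸ hw0)
    exact this
  -- N is finitely generated
  have hNfg : N.FG := by
    have hNspan : N = Submodule.span (pairSubring R F) (Set.range xx) := by
      refine le_antisymm ?_ (Submodule.span_le.2 ?_)
      · intro z hz
        obtain ⟨⟨v, hv⟩, hcond⟩ := (hN_mem z).1 hz
        have hz2 : z = ∑ j, (((Φ (u j) z).1, (Φ (u j) z).1) : F × F) • xx j := by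
          have := key_repr v
          rw [← hv] at this
          exact this
        rw [hz2]
        apply Submodule.sum_mem
        intro j _
        have hcj : Φ (u j) z ∈ pairSubring R F := hcond (u j) (hEset₂ (hu_mem j))
        obtain ⟨⟨rj, hrj⟩, _⟩ := mem_pairSubring.1 hcj
        have : (((Φ (u j) z).1, (Φ (u j) z).1) : F × F) ∈ pairSubring R F := by
          rw [← hrj]; exact diag_mem_pairSubring rj
        exact Submodule.smul_mem _ (⟨_, this⟩ : pairSubring R F)
          (Submodule.subset_span (Set.mem_range_self j))
      · intro x hx
        obtain ⟨j, rfl⟩ := hx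
        exact hxxN j
    rw [hNspan]
    exact Submodule.fg_span (Set.finite_range xx)
  -- the candidate lattice
  set Y : Submodule (pairSubring R F) V := E ⊔ N with hYdef
  have hYcoe : (Y : Set V) = (E : Set V) + (N : Set V) := Submodule.coe_sup E N
  have hYfg : Y.FG := (hMfg.map _).sup hNfg
  have hspan : Submodule.span (F × F) (Y : Set V) = ⊤ := by
    rw [eq_top_iff]
    rintro v -
    have h1 : (((1:F),(0:F)) : F × F) • v ∈ Submodule.span (F × F) (Y : Set V) := by
      obtain ⟨c, hcv⟩ := hS1 v
      rw [hcv]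
      apply Submodule.sum_mem
      intro i _
      exact Submodule.smul_mem _ _
        (Submodule.subset_span (Submodule.mem_sup_left (hu_mem i)))
    have h2 : (((0:F),(1:F)) : F × F) • v ∈ Submodule.span (F × F) (Y : Set V) := by
      rw [key_repr v]
      apply Submodule.sum_mem
      intro j _
      exact Submodule.smul_mem _ _
        (Submodule.subset_span (Submodule.mem_sup_right (hxxN j)))
    rw [← esmul_add_fsmul (F := F) v]
    exact Submodule.add_mem _ h1 h2
  have himg : eImage F (Y : Set V) = eImage F (M : Set V) := by
    rw [hEset]
    ext w
    constructor
    · rintro ⟨z, hz, rfl⟩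
      rw [hYcoe] at hz
      rw [Set.mem_add] at hz
      obtain ⟨a, ha, b, hb, rfl⟩ := hz
      obtain ⟨⟨vb, hvb⟩, -⟩ := (hN_mem b).1 hb
      show (((1:F),(0:F)) : F × F) • (a + b) ∈ (E : Set V)
      rw [smul_add, hE_idem a ha, hvb, esmul_fsmul, add_zero]
      exact ha
    · intro hw
      exact ⟨w, Submodule.mem_sup_left hw, hE_idem w hw⟩
  have hdual : (Y : Set V) = {x : V | ∀ y ∈ Y, Φ x y ∈ pairSubring R F} := by
    ext z
    constructor
    · intro hz
      rw [hYcoe, Set.mem_add] at hz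
      obtain ⟨a, ha, b, hb, rfl⟩ := hz
      intro y hy
      have hy' : (y : V) ∈ (Y : Set V) := hy
      rw [hYcoe, Set.mem_add] at hy'
      obtain ⟨a', ha', b', hb', rfl⟩ := hy'
      rw [hadd₁, hadd₂, hadd₂]
      obtain ⟨⟨vb, hvb⟩, hbc⟩ := (hN_mem b).1 hb
      obtain ⟨⟨vb', hvb'⟩, hbc'⟩ := (hN_mem b').1 hb'
      have t1 : Φ a a' = 0 := by
        rw [← hE_idem a ha, ← hE_idem a' ha']
        exact phi_ee hsmul₁ hsmul₂ _ _
      have t2 : Φ a b' ∈ pairSubring R F := hbc' a (hEset₂ ha)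
      have t3 : Φ b a' ∈ pairSubring R F := by
        rw [hherm]
        exact swap_mem_pairSubring (hbc a' (hEset₂ ha'))
      have t4 : Φ b b' = 0 := by
        rw [hvb, hvb']
        exact phi_ff hsmul₁ hsmul₂ _ _
      rw [t1, t4, zero_add, add_zero]
      exact Subring.add_mem _ t2 t3
    · intro hz
      have hz' : ∀ y ∈ Y, Φ z y ∈ pairSubring R F := hz
      rw [hYcoe, Set.mem_add]
      refine ⟨(((1:F),(0:F)) : F × F) • z, ?_, (((0:F),(1:F)) : F × F) • z, ?_,
        esmul_add_fsmul z⟩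
      · -- biduality: the e-part lies in E
        obtain ⟨c, hcz⟩ := hS1 z
        have hcoef : ∀ j, ((c j, (0:F)) : F × F) ∈ pairSubring R F := by
          intro j
          have hfz : Φ ((((0:F),(1:F)) : F × F) • z) (xx j) = 0 := by
            rw [← hxx_idem j]
            exact phi_ff hsmul₁ hsmul₂ _ _
          have h1 : Φ ((((1:F),(0:F)) : F × F) • z) (xx j) ∈ pairSubring R F := by
            have hsub : (((1:F),(0:F)) : F × F) • z = z - (((0:F),(1:F)) : F × F) • z := by
              rw [eq_sub_iff_add_eq, esmul_add_fsmul]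
            rw [hsub, phi_sub₁ hadd₁ hsmul₁, hfz, sub_zero]
            exact hz' (xx j) (Submodule.mem_sup_right (hxxN j))
          have h2 : Φ ((((1:F),(0:F)) : F × F) • z) (xx j) = ((c j, (0:F)) : F × F) := by
            rw [hcz, phi_sum₁ hadd₁ hsmul₁]
            have hterm : ∀ i, Φ (((c i, c i) : F × F) • u i) (xx j)
                = (((if i = j then c i else 0) : F), (0:F)) := by
              intro i
              rw [hsmul₁, hphi i j]
              refine Prod.ext ?_ ?_
              · show c i * (if i = j then (1:F) else 0) = _
                by_cases h : i = j <;> simp [h]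
              · show c i * 0 = 0
                exact mul_zero _
            rw [Finset.sum_congr rfl (fun i _ => hterm i)]
            refine Prod.ext ?_ ?_
            · rw [Prod.fst_sum]; simp
            · rw [Prod.snd_sum]; simp
          rw [h2] at h1
          exact h1
        choose rr hrr using fun j => (mem_pairSubring.1 (hcoef j)).1
        have hEmem : (((1:F),(0:F)) : F × F) • z ∈ E := by
          rw [hcz]
          apply Submodule.sum_mem
          intro i _
          have hci : ((c i, c i) : F × F) ∈ pairSubring R F := by
            have : algebraMap R F (rr i) = c i := hrr i
            rw [← this]
            exact diag_mem_pairSubring (rr i)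
          exact Submodule.smul_mem _ (⟨_, hci⟩ : pairSubring R F) (hu_mem i)
        exact hEmem
      · refine (hN_mem _).2 ⟨⟨z, rfl⟩, fun u' hu' => ?_⟩
        have hu'E : u' ∈ E := hEset₁ hu'
        have hsub : (((0:F),(1:F)) : F × F) • z = z - (((1:F),(0:F)) : F × F) • z := by
          rw [eq_sub_iff_add_eq, add_comm, esmul_add_fsmul]
        rw [hsub, phi_sub₂ hadd₂ hsmul₂]
        have h0 : Φ u' ((((1:F),(0:F)) : F × F) • z) = 0 := by
          rw [← hE_idem u' hu'E]
          exact phi_ee hsmul₁ hsmul₂ _ _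
        rw [h0, sub_zero, hherm]
        exact swap_mem_pairSubring (hz' u' (Submodule.mem_sup_left hu'E))
  -- every lattice with the three properties equals E + N as a set
  have hS : ∀ Y' : Submodule (pairSubring R F) V,
      ((Y'.FG ∧ Submodule.span (F × F) (Y' : Set V) = ⊤) ∧
        eImage F (Y' : Set V) = eImage F (M : Set V) ∧
        (Y' : Set V) = {x : V | ∀ y ∈ Y', Φ x y ∈ pairSubring R F}) →
      (Y' : Set V) = {z : V | ∃ u ∈ eImage F (M : Set V), ∃ x : V,
        (∃ v : V, x = (((0 : F), (1 : F)) : F × F) • v) ∧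
        (∀ u' ∈ eImage F (M : Set V), Φ u' x ∈ pairSubring R F) ∧
        z = u + x} := by
    rintro Y' ⟨-, hYe', hYd'⟩
    have heY' : ∀ y ∈ Y', (((1:F),(0:F)) : F × F) • y ∈ Y' := by
      intro y hy
      exact Y'.smul_mem (⟨_, e_mem_pairSubring⟩ : pairSubring R F) hy
    have hdY' : ∀ a, a ∈ Y' → ∀ y ∈ Y', Φ a y ∈ pairSubring R F := by
      intro a ha
      have : a ∈ (Y' : Set V) := ha
      rw [hYd'] at this
      exact this
    ext z
    constructor
    · intro hz
      refine ⟨(((1:F),(0:F)) : F × F) • z, ?_, (((0:F),(1:F)) : F × F) • z,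
        ⟨z, rfl⟩, ?_, (esmul_add_fsmul z).symm⟩
      · rw [← hYe']
        exact ⟨z, hz, rfl⟩
      · intro u'' hu''
        rw [← hYe'] at hu''
        obtain ⟨y'', hy'', rfl⟩ := hu''
        have hsub : (((0:F),(1:F)) : F × F) • z = z - (((1:F),(0:F)) : F × F) • z := by
          rw [eq_sub_iff_add_eq, add_comm, esmul_add_fsmul]
        rw [hsub, phi_sub₂ hadd₂ hsmul₂, phi_ee hsmul₁ hsmul₂, sub_zero]
        exact hdY' _ (heY' y'' hy'') z hz
    · rintro ⟨a, ha, b, ⟨vb, rfl⟩, hbcond, rfl⟩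
      have haY' : a ∈ Y' := by
        rw [← hYe'] at ha
        obtain ⟨ya, hya, rfl⟩ := ha
        exact heY' ya hya
      have : a + (((0:F),(1:F)) : F × F) • vb ∈ (Y' : Set V) := by
        rw [hYd']
        intro y hy
        rw [hadd₁]
        apply Subring.add_mem
        · exact hdY' a haY' y hy
        · have hysplit := hadd₂ ((((0:F),(1:F)) : F × F) • vb)
            ((((1:F),(0:F)) : F × F) • y) ((((0:F),(1:F)) : F × F) • y)
          rw [esmul_add_fsmul] at hysplit
          rw [hysplit]
          apply Subring.add_mem
          · have hu'' : (((1:F),(0:F)) : F × F) • y ∈ eImage F (M : Set V) := by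
              rw [← hYe']
              exact ⟨y, hy, rfl⟩
            rw [hherm]
            exact swap_mem_pairSubring (hbcond _ hu'')
          · rw [phi_ff hsmul₁ hsmul₂]
            exact Subring.zero_mem _
      exact this
  refine ⟨⟨Y, ⟨⟨hYfg, hspan⟩, himg, hdual⟩, ?_⟩, hS⟩
  intro Y' hY'
  have h1 := hS Y' hY'
  have h2 := hS Y ⟨⟨hYfg, hspan⟩, himg, hdual⟩
  exact SetLike.ext' (h1.trans h2.symm)
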